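/- arXiv:1005.1954 — 14 statements merged into one kernel-verified Lean document; each statement's English description precedes it below -/
import Mathlib

section
/- Every primitive inverse semigroup with zero is categorical at 0: if ab ≠ 0 and bc ≠ 0 then abc ≠ 0. -/
/-- An inverse semigroup structure on a semigroup with zero, given by an inverse map. -/
def IsInverseSemigroup (Q : Type*) [SemigroupWithZero Q] (inv : Q → Q) : Prop :=
  (∀ a : Q, a * inv a * a = a) ∧ (∀ a : Q, inv a * a * inv a = inv a) ∧
  (∀ e f : Q, e * e = e → f * f = f → e * f = f * e)

/-- A primitive inverse semigroup: all nonzero idempotents are primitive. -/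
def IsPrimitiveInvSemigroup (Q : Type*) [SemigroupWithZero Q] (inv : Q → Q) : Prop :=
  IsInverseSemigroup Q inv ∧
  ∀ e : Q, e * e = e → e ≠ 0 →
    ∀ f : Q, f * f = f → e * f = f → f * e = f → f = 0 ∨ f = e

/-- Green's R relation (via Q¹). -/
def GreenR {Q : Type*} [SemigroupWithZero Q] (a b : Q) : Prop :=
  a = b ∨ ∃ u v : Q, a * u = b ∧ b * v = a

/-- Green's L relation (via Q¹). -/
def GreenL {Q : Type*} [SemigroupWithZero Q] (a b : Q) : Prop :=
  a = b ∨ ∃ u v : Q, u * a = b ∧ v * b = a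

/-- Categorical at 0. -/
def CategoricalAtZero (S : Type*) [SemigroupWithZero S] : Prop :=
  ∀ a b c : S, a * b ≠ 0 → b * c ≠ 0 → a * b * c ≠ 0

/-- 0-cancellative. -/
def ZeroCancellative (S : Type*) [SemigroupWithZero S] : Prop :=
  (∀ a b c : S, a * b = a * c → a * b ≠ 0 → b = c) ∧
  (∀ a b c : S, b * a = c * a → b * a ≠ 0 → b = c)

/-- The relation R* on a semigroup, defined via S¹ = WithOne S. -/
def RStar {S : Type*} [SemigroupWithZero S] (a b : S) : Prop :=
  ∀ x y : WithOne S, x * (a : WithOne S) = y * (a : WithOne S) ↔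
    x * (b : WithOne S) = y * (b : WithOne S)

/-- The relation λ on a whole semigroup with zero. -/
def Lam {S : Type*} [SemigroupWithZero S] (a b : S) : Prop :=
  (a = 0 ∧ b = 0) ∨ ∃ x y : S, x * a = y * b ∧ x * a ≠ 0

/-- The relation λ relative to a subset S of Q. -/
def LamOn {Q : Type*} [SemigroupWithZero Q] (S : Set Q) (a b : Q) : Prop :=
  (a = 0 ∧ b = 0) ∨ ∃ x ∈ S, ∃ y ∈ S, x * a = y * b ∧ x * a ≠ 0

/-- The relation ρ relative to a subset S of Q. -/
def RhoOn {Q : Type*} [SemigroupWithZero Q] (S : Set Q) (a b : Q) : Prop :=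
  (a = 0 ∧ b = 0) ∨ ∃ x ∈ S, ∃ y ∈ S, a * x = b * y ∧ a * x ≠ 0

/-- The relation R* on a subset S of Q, defined via S¹. -/
def RStarOn {Q : Type*} [SemigroupWithZero Q] (S : Set Q) (a b : Q) : Prop :=
  (∀ x ∈ S, ∀ y ∈ S, (x * a = y * a ↔ x * b = y * b)) ∧
  (∀ x ∈ S, (x * a = a ↔ x * b = b)) ∧
  (∀ y ∈ S, (a = y * a ↔ b = y * b))

/-- S is a subsemigroup of Q. -/
def IsSubsemigroup {Q : Type*} [SemigroupWithZero Q] (S : Set Q) : Prop :=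
  ∀ a ∈ S, ∀ b ∈ S, a * b ∈ S

/-- S is a left I-order in Q (with respect to the inverse map `inv`). -/
def IsLeftIOrder {Q : Type*} [SemigroupWithZero Q] (S : Set Q) (inv : Q → Q) : Prop :=
  IsSubsemigroup S ∧ ∀ q : Q, ∃ a ∈ S, ∃ b ∈ S, q = inv a * b



lemma prim_idem_eq {Q : Type*} [SemigroupWithZero Q]
    (hprim : ∀ e : Q, e * e = e → e ≠ 0 →
      ∀ f : Q, f * f = f → e * f = f → f * e = f → f = 0 ∨ f = e)
    {e f : Q} (hee : e * e = e) (hff : f * f = f) (hcomm : e * f = f * e)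
    (hne : e ≠ 0) (hnf : f ≠ 0) (hgne : e * f ≠ 0) : e = f := by
  have hgg : e * f * (e * f) = e * f := by
    rw [mul_assoc, ← mul_assoc f, ← hcomm, mul_assoc, hff, ← mul_assoc, hee]
  have heg : e * (e * f) = e * f := by rw [← mul_assoc, hee]
  have hge : e * f * e = e * f := by rw [hcomm, mul_assoc, hee]
  have hfg : f * (e * f) = e * f := by rw [← mul_assoc, ← hcomm, mul_assoc, hff]
  have hgf : e * f * f = e * f := by rw [mul_assoc, hff]
  rcases hprim e hee hne (e * f) hgg heg hge with h | h
  · exact absurd h hgne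
  rcases hprim f hff hnf (e * f) hgg hfg hgf with h' | h'
  · exact absurd h' hgne
  exact h.symm.trans h'

lemma key_lemma_stmt4 {Q : Type*} [SemigroupWithZero Q] (inv : Q → Q)
    (hQ : IsPrimitiveInvSemigroup Q inv) {a b : Q} (hab : a * b ≠ 0) :
    inv a * a = b * inv b := by
  obtain ⟨⟨h1, h2, h3⟩, hprim⟩ := hQ
  have hee : inv a * a * (inv a * a) = inv a * a := by
    rw [mul_assoc, ← mul_assoc a, h1 a]
  have hff : b * inv b * (b * inv b) = b * inv b := by
    rw [mul_assoc, ← mul_assoc (inv b), h2 b]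
  have habe : a * ((inv a * a) * (b * inv b)) * b = a * b := by
    rw [← mul_assoc a (inv a * a) (b * inv b), ← mul_assoc a (inv a) a, h1 a,
      mul_assoc a (b * inv b) b, h1 b]
  have hne : inv a * a ≠ 0 := by
    intro h
    apply hab
    have ha : a = 0 := by rw [← h1 a, mul_assoc, h, mul_zero]
    rw [ha, zero_mul]
  have hnf : b * inv b ≠ 0 := by
    intro h
    apply hab
    have hb : b = 0 := by rw [← h1 b, h, zero_mul]
    rw [hb, mul_zero]
  have hgne : (inv a * a) * (b * inv b) ≠ 0 := by
    intro h
    apply hab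
    rw [← habe, h, mul_zero, zero_mul]
  exact prim_idem_eq hprim hee hff (h3 _ _ hee hff) hne hnf hgne

theorem stmt_4 {Q : Type*} [SemigroupWithZero Q] (inv : Q → Q)
    (hQ : IsPrimitiveInvSemigroup Q inv) : CategoricalAtZero Q := by
  intro a b c hab hbc habc
  have h1 := hQ.1.1
  have key := key_lemma_stmt4 inv hQ hab
  have hb : inv a * a * b = b := by rw [key]; exact h1 b
  apply hbc
  calc b * c = inv a * a * b * c := by rw [hb]
  _ = inv a * (a * b * c) := by rw [mul_assoc, mul_assoc, ← mul_assoc a]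
  _ = 0 := by rw [habc, mul_zero]
end

section
/- Every primitive inverse semigroup with zero is 0-cancellative: ab = ac ≠ 0 implies b = c, and ba = ca ≠ 0 implies b = c. -/
theorem stmt_5 {Q : Type*} [SemigroupWithZero Q] (inv : Q → Q)
    (hQ : IsPrimitiveInvSemigroup Q inv) : ZeroCancellative Q := by
  obtain ⟨⟨h1, h2, h3⟩, hprim⟩ := hQ
  -- key: two nonzero commuting idempotents with nonzero product are equal
  have key : ∀ e f : Q, e * e = e → f * f = f → e ≠ 0 → f ≠ 0 → e * f ≠ 0 → e = f := by
    intro e f he hf he0 hf0 hef0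
    have hcomm := h3 e f he hf
    have hidem : (e * f) * (e * f) = e * f := by
      rw [mul_assoc, ← mul_assoc f e f, ← hcomm, mul_assoc e f f, hf, ← mul_assoc, he]
    have hle1 : e * (e * f) = e * f := by rw [← mul_assoc, he]
    have hre1 : (e * f) * e = e * f := by
      rw [mul_assoc, ← hcomm, ← mul_assoc, he]
    have hlf1 : f * (e * f) = e * f := by
      rw [← mul_assoc, ← hcomm, mul_assoc, hf]
    have hrf1 : (e * f) * f = e * f := by rw [mul_assoc, hf]
    have h4 := hprim e he he0 (e * f) hidem hle1 hre1
    have h5 := hprim f hf hf0 (e * f) hidem hlf1 hrf1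
    rcases h4 with h4 | h4
    · exact absurd h4 hef0
    rcases h5 with h5 | h5
    · exact absurd h5 hef0
    exact h4.symm.trans h5
  have idemL : ∀ a : Q, (inv a * a) * (inv a * a) = inv a * a := by
    intro a
    rw [mul_assoc, ← mul_assoc a, h1]
  have idemR : ∀ a : Q, (a * inv a) * (a * inv a) = a * inv a := by
    intro a
    rw [mul_assoc, ← mul_assoc (inv a), h2]
  have haea : ∀ a : Q, a * (inv a * a) = a := by
    intro a; rw [← mul_assoc, h1]
  have heaa : ∀ a : Q, (a * inv a) * a = a := by
    intro a; rw [h1]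
  -- step: if a*b ≠ 0 then (inv a * a) * b = b
  have step : ∀ a b : Q, a * b ≠ 0 → (inv a * a) * b = b := by
    intro a b hab
    set e := inv a * a with hedef
    set f := b * inv b with hfdef
    have he : e * e = e := idemL a
    have hf : f * f = f := idemR b
    have hfb : f * b = b := heaa b
    have hae : a * e = a := haea a
    have he0 : e ≠ 0 := by
      intro h
      apply hab
      rw [← hae, h, mul_zero, zero_mul]
    have hf0 : f ≠ 0 := by
      intro h
      apply hab
      rw [← hfb, h, zero_mul, mul_zero]
    have hef0 : e * f ≠ 0 := by
      intro h
      apply hab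
      have : a * b = a * ((e * f) * b) := by
        rw [mul_assoc e f b, hfb, ← mul_assoc, hae]
      rw [this, h, zero_mul, mul_zero]
    have hef := key e f he hf he0 hf0 hef0
    rw [hef, hfb]
  -- step': if b*a ≠ 0 then b * (a * inv a) = b
  have step' : ∀ a b : Q, b * a ≠ 0 → b * (a * inv a) = b := by
    intro a b hba
    set e := a * inv a with hedef
    set f := inv b * b with hfdef
    have he : e * e = e := idemR a
    have hf : f * f = f := idemL b
    have hbf : b * f = b := haea b
    have hea : e * a = a := heaa a
    have he0 : e ≠ 0 := by
      intro h
      apply hba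
      rw [← hea, h, zero_mul, mul_zero]
    have hf0 : f ≠ 0 := by
      intro h
      apply hba
      rw [← hbf, h, mul_zero, zero_mul]
    have hef0 : f * e ≠ 0 := by
      intro h
      apply hba
      have : b * a = b * ((f * e) * a) := by
        rw [mul_assoc f e a, hea, ← mul_assoc, hbf]
      rw [this, h, zero_mul, mul_zero]
    have hef := key f e hf he hf0 he0 hef0
    rw [← hef, hbf]
  constructor
  · intro a b c habc hab
    have hac : a * c ≠ 0 := by rw [← habc]; exact hab
    have hb := step a b hab
    have hc := step a c hac
    rw [← hb, ← hc, mul_assoc, mul_assoc, habc]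
  · intro a b c habc hab
    have hac : c * a ≠ 0 := by rw [← habc]; exact hab
    have hb := step' a b hab
    have hc := step' a c hac
    rw [← hb, ← hc, ← mul_assoc, ← mul_assoc, habc]
end

section
/- Let S be a semigroup with zero that is categorical at 0 and 0-cancellative. If x ≠ 0 and xa ≠ 0, then x R* xa. -/
theorem stmt_7 {S : Type*} [SemigroupWithZero S]
    (hcat : CategoricalAtZero S) (hcanc : ZeroCancellative S)
    (x a : S) (hx : x ≠ 0) (hxa : x * a ≠ 0) : RStar x (x * a) := by
  obtain ⟨hl, hr⟩ := hcanc
  have key : ∀ s : S, s * x = 0 ↔ s * (x * a) = 0 := by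
    intro s
    constructor
    · intro h; rw [← mul_assoc, h, zero_mul]
    · intro h
      by_contra hs
      exact hcat s x a hs hxa (by rwa [mul_assoc])
  have main : ∀ s t : S, s * x = t * x ↔ s * (x * a) = t * (x * a) := by
    intro s t
    constructor
    · intro h; rw [← mul_assoc, ← mul_assoc, h]
    · intro h
      by_cases h0 : s * (x * a) = 0
      · have hs : s * x = 0 := (key s).2 h0
        have ht : t * x = 0 := (key t).2 (by rw [← h]; exact h0)
        rw [hs, ht]
      · exact hr a (s * x) (t * x) (by rw [mul_assoc, mul_assoc]; exact h)
          (by rw [mul_assoc]; exact h0)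
  have one1 : ∀ s : S, (s * x = x ↔ s * (x * a) = x * a) := by
    intro s
    constructor
    · intro h; rw [← mul_assoc, h]
    · intro h
      exact hr a (s * x) x (by rw [mul_assoc]; exact h) (by rw [mul_assoc, h]; exact hxa)
  intro u v
  induction u using WithOne.recOneCoe with
  | one =>
    induction v using WithOne.recOneCoe with
    | one => simp
    | coe t =>
      simp only [one_mul, ← WithOne.coe_mul, WithOne.coe_inj]
      rw [eq_comm, eq_comm (a := (x*a))]
      exact one1 t
  | coe s =>
    induction v using WithOne.recOneCoe with
    | one =>
      simp only [one_mul, ← WithOne.coe_mul, WithOne.coe_inj]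
      exact one1 s
    | coe t =>
      simp only [← WithOne.coe_mul, WithOne.coe_inj]
      exact main s t
end

section
/- Let S be a subsemigroup of a primitive inverse semigroup Q with zero. If S is a left I-order in Q (every element of Q has the form a⁻¹b with a, b ∈ S), then 0 ∈ S. -/
/-- In a primitive setting, two commuting nonzero idempotents with nonzero product
are equal. -/
lemma prim_meet {Q : Type*} [SemigroupWithZero Q]
    (hprim : ∀ e : Q, e * e = e → e ≠ 0 →
      ∀ f : Q, f * f = f → e * f = f → f * e = f → f = 0 ∨ f = e)
    {e f : Q} (he : e * e = e) (hf : f * f = f) (hc : e * f = f * e)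
    (hne : e * f ≠ 0) (he0 : e ≠ 0) (hf0 : f ≠ 0) : e = f := by
  have hk : (e * f) * (e * f) = e * f := by
    rw [mul_assoc e f (e * f), ← mul_assoc f e f, ← hc, mul_assoc e f f, hf,
      ← mul_assoc, he]
  have h1 : e * (e * f) = e * f := by rw [← mul_assoc, he]
  have h2 : (e * f) * e = e * f := by rw [mul_assoc, ← hc, ← mul_assoc, he]
  have h3 : f * (e * f) = e * f := by rw [← mul_assoc, ← hc, mul_assoc, hf]
  have h4 : (e * f) * f = e * f := by rw [mul_assoc, hf]
  rcases hprim e he he0 (e * f) hk h1 h2 with h | h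
  · exact absurd h hne
  · rcases hprim f hf hf0 (e * f) hk h3 h4 with h' | h'
    · exact absurd h' hne
    · rw [← h, h']

theorem stmt_8 {Q : Type*} [SemigroupWithZero Q] (inv : Q → Q)
    (hQ : IsPrimitiveInvSemigroup Q inv) (S : Set Q)
    (hS : IsLeftIOrder S inv) : (0 : Q) ∈ S := by
  obtain ⟨⟨hinv1, hinv2, hcomm⟩, hprim⟩ := hQ
  obtain ⟨hSmul, hrep⟩ := hS
  by_contra h0
  obtain ⟨a, ha, b, hb, hab⟩ := hrep 0
  have ha0 : a ≠ 0 := fun h => h0 (h ▸ ha)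
  have hb0 : b ≠ 0 := fun h => h0 (h ▸ hb)
  have haa : a * a ≠ 0 := fun h => h0 (h ▸ hSmul a ha a ha)
  have habne : a * b ≠ 0 := fun h => h0 (h ▸ hSmul a ha b hb)
  -- if (inv p * p) * (q * inv q) = 0 then p * q = 0
  have key : ∀ p q : Q, (inv p * p) * (q * inv q) = 0 → p * q = 0 := by
    intro p q h
    calc p * q = (p * (inv p * p)) * ((q * inv q) * q) := by
          rw [← mul_assoc p (inv p) p, hinv1 p, hinv1 q]
      _ = (p * ((inv p * p) * (q * inv q))) * q := by
          rw [← mul_assoc (p * (inv p * p)) (q * inv q) q,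
            mul_assoc p (inv p * p) (q * inv q)]
      _ = (p * 0) * q := by rw [h]
      _ = 0 := by rw [mul_zero, zero_mul]
  have hge : (inv a * a) * (a * inv a) ≠ 0 := fun h => haa (key a a h)
  have hgf : (inv a * a) * (b * inv b) ≠ 0 := fun h => habne (key a b h)
  have hee : (a * inv a) * (a * inv a) = a * inv a := by rw [← mul_assoc, hinv1 a]
  have hgg : (inv a * a) * (inv a * a) = inv a * a := by rw [← mul_assoc, hinv2 a]
  have hff : (b * inv b) * (b * inv b) = b * inv b := by rw [← mul_assoc, hinv1 b]
  have hene : a * inv a ≠ 0 := fun h => ha0 (by rw [← hinv1 a, h, zero_mul])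
  have hgne : inv a * a ≠ 0 := fun h =>
    ha0 (by rw [← hinv1 a, mul_assoc, h, mul_zero])
  have hfne : b * inv b ≠ 0 := fun h => hb0 (by rw [← hinv1 b, h, zero_mul])
  have hc1 : (inv a * a) * (a * inv a) = (a * inv a) * (inv a * a) :=
    hcomm _ _ hgg hee
  have hc2 : (inv a * a) * (b * inv b) = (b * inv b) * (inv a * a) :=
    hcomm _ _ hgg hff
  have hgeq : inv a * a = a * inv a := prim_meet hprim hgg hee hc1 hge hgne hene
  have hgfq : inv a * a = b * inv b := prim_meet hprim hgg hff hc2 hgf hgne hfne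
  have hef : a * inv a = b * inv b := hgeq.symm.trans hgfq
  have heb : (a * inv a) * b = 0 := by rw [mul_assoc, ← hab, mul_zero]
  exact hb0 (by rw [← hinv1 b, ← hef]; exact heb)
end

section
/- Let S be a left I-order in a primitive inverse semigroup Q with zero. Then for a, b ∈ S, a L b in Q if and only if a λ b in S, where a λ b means a = b = 0 or Sa ∩ Sb ≠ {0}. -/
section Aux

variable {Q : Type*} [SemigroupWithZero Q] {inv : Q → Q}

lemma amul (hQ : IsPrimitiveInvSemigroup Q inv) (a : Q) : a * (inv a * a) = a := by
  rw [← mul_assoc]; exact hQ.1.1 a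

lemma idem_invmul (hQ : IsPrimitiveInvSemigroup Q inv) (a : Q) :
    (inv a * a) * (inv a * a) = inv a * a := by
  rw [mul_assoc, amul hQ]

lemma idem_mulinv (hQ : IsPrimitiveInvSemigroup Q inv) (a : Q) :
    (a * inv a) * (a * inv a) = a * inv a := by
  rw [← mul_assoc, hQ.1.1 a]

/-- In a primitive inverse semigroup, if `d * f ≠ 0` with `f` idempotent then `d * f = d`. -/
lemma rightAbs (hQ : IsPrimitiveInvSemigroup Q inv) (f d : Q) (hf : f * f = f)
    (hdf : d * f ≠ 0) : d * f = d := by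
  obtain ⟨⟨h1, h2, h3⟩, hP⟩ := hQ
  have h1' : ∀ a : Q, a * (inv a * a) = a := fun a => by rw [← mul_assoc]; exact h1 a
  set g := inv d * d with hgdef
  have hgg : g * g = g := by
    show inv d * d * (inv d * d) = inv d * d
    rw [mul_assoc, h1']
  have hkey : d * (g * f) = d * f := by
    show d * (inv d * d * f) = d * f
    rw [← mul_assoc, ← mul_assoc, h1 d]
  have hgf_ne : g * f ≠ 0 := fun h => hdf (by rw [← hkey, h, mul_zero])
  have hcomm : f * g = g * f := h3 f g hf hgg
  have hfg : f * (g * f) = g * f := by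
    rw [← mul_assoc, hcomm, mul_assoc, hf]
  have hgf_le_f : (g * f) * f = g * f := by rw [mul_assoc, hf]
  have hidem : (g * f) * (g * f) = g * f := by
    rw [mul_assoc g f, hfg, ← mul_assoc, hgg]
  have hf0 : f ≠ 0 := fun h0 => hdf (by rw [h0, mul_zero])
  have hg0 : g ≠ 0 := fun h0 => hgf_ne (by rw [h0, zero_mul])
  have e1 := hP f hf hf0 (g * f) hidem hfg hgf_le_f
  have hgleg1 : g * (g * f) = g * f := by rw [← mul_assoc, hgg]
  have hgleg2 : (g * f) * g = g * f := by rw [mul_assoc, hcomm, ← mul_assoc, hgg]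
  have e2 := hP g hgg hg0 (g * f) hidem hgleg1 hgleg2
  have hfeqg : f = g := by
    rcases e1 with h | h
    · exact absurd h hgf_ne
    · rcases e2 with h' | h'
      · exact absurd h' hgf_ne
      · rw [← h, h']
  rw [hfeqg]; exact h1' d

/-- In a primitive inverse semigroup, if `f * d ≠ 0` with `f` idempotent then `f * d = d`. -/
lemma leftAbs (hQ : IsPrimitiveInvSemigroup Q inv) (f d : Q) (hf : f * f = f)
    (hfd : f * d ≠ 0) : f * d = d := by
  obtain ⟨⟨h1, h2, h3⟩, hP⟩ := hQ
  set g := d * inv d with hgdef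
  have hgg : g * g = g := by
    show d * inv d * (d * inv d) = d * inv d
    rw [← mul_assoc, h1 d]
  have hgd : g * d = d := by show d * inv d * d = d; exact h1 d
  have hkey : (f * g) * d = f * d := by rw [mul_assoc, hgd]
  have hfg_ne : f * g ≠ 0 := fun h => hfd (by rw [← hkey, h, zero_mul])
  have hcomm : g * f = f * g := h3 g f hgg hf
  have hgfg : g * (f * g) = f * g := by
    rw [← mul_assoc, hcomm, mul_assoc, hgg]
  have hffg : f * (f * g) = f * g := by rw [← mul_assoc, hf]
  have hfgf : (f * g) * f = f * g := by
    rw [mul_assoc, hcomm, ← mul_assoc, hf]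
  have hfgg : (f * g) * g = f * g := by rw [mul_assoc, hgg]
  have hidem : (f * g) * (f * g) = f * g := by
    rw [mul_assoc f g, hgfg, ← mul_assoc, hf]
  have hf0 : f ≠ 0 := fun h0 => hfd (by rw [h0, zero_mul])
  have hg0 : g ≠ 0 := fun h0 => hfg_ne (by rw [h0, mul_zero])
  have e1 := hP f hf hf0 (f * g) hidem hffg hfgf
  have e2 := hP g hgg hg0 (f * g) hidem hgfg hfgg
  have hfeqg : f = g := by
    rcases e1 with h | h
    · exact absurd h hfg_ne
    · rcases e2 with h' | h'
      · exact absurd h' hfg_ne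
      · rw [← h, h']
  rw [hfeqg]; exact hgd

end Aux

theorem stmt_9 {Q : Type*} [SemigroupWithZero Q] (inv : Q → Q)
    (hQ : IsPrimitiveInvSemigroup Q inv) (S : Set Q)
    (hS : IsLeftIOrder S inv) :
    ∀ a ∈ S, ∀ b ∈ S, (GreenL a b ↔ LamOn S a b) := by
  obtain ⟨hSsub, hSord⟩ := hS
  intro a _ha b _hb
  constructor
  · rintro (rfl | ⟨u, v, hu, hv⟩)
    · by_cases h0 : a = 0
      · exact Or.inl ⟨h0, h0⟩
      · obtain ⟨c, hc, d, hd, hcd⟩ := hSord (inv a)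
        have ha' : (a * inv c) * (d * a) = a := by
          have h := hQ.1.1 a
          rw [hcd] at h
          calc (a * inv c) * (d * a) = a * (inv c * d) * a := by simp only [mul_assoc]
            _ = a := h
        have hda : d * a ≠ 0 := fun h => h0 (by rw [← ha', h, mul_zero])
        exact Or.inr ⟨d, hd, d, hd, rfl, hda⟩
    · by_cases ha0 : a = 0
      · exact Or.inl ⟨ha0, by rw [← hu, ha0, mul_zero]⟩
      · have hb0 : b ≠ 0 := fun h => ha0 (by rw [← hv, h, mul_zero])
        have hbinva : b * (inv a * a) = b := by
          rw [← hu, mul_assoc, amul hQ]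
        obtain ⟨c, hc, d, hd, hcd⟩ := hSord (b * inv a)
        have hb'' : inv c * (d * a) = b := by
          rw [← mul_assoc, ← hcd, mul_assoc]; exact hbinva
        have h5 : inv c * ((c * inv c) * (d * a)) = b := by
          calc inv c * ((c * inv c) * (d * a))
              = (inv c * c * inv c) * (d * a) := by simp only [mul_assoc]
            _ = inv c * (d * a) := by rw [hQ.1.2.1 c]
            _ = b := hb''
        have hne : (c * inv c) * (d * a) ≠ 0 :=
          fun h => hb0 (by rw [← h5, h, mul_zero])
        have heq : (c * inv c) * (d * a) = d * a :=
          leftAbs hQ _ _ (idem_mulinv hQ c) hne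
        have hda : d * a ≠ 0 := fun h => hb0 (by rw [← hb'', h, mul_zero])
        have hcb : d * a = c * b := by
          rw [← hb'', ← mul_assoc]; exact heq.symm
        exact Or.inr ⟨d, hd, c, hc, hcb, hda⟩
  · rintro (⟨rfl, rfl⟩ | ⟨x, _hx, y, _hy, hxy, hne⟩)
    · exact Or.inl rfl
    · have ha0 : a ≠ 0 := fun h => hne (by rw [h, mul_zero])
      have hb0 : b ≠ 0 := fun h => hne (by rw [hxy, h, mul_zero])
      have h6 : y * (b * (inv a * a)) = x * a := by
        rw [← mul_assoc, ← hxy, mul_assoc, amul hQ]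
      have hbf : b * (inv a * a) ≠ 0 :=
        fun h => hne (by rw [← h6, h, mul_zero])
      have hub : b * (inv a * a) = b := rightAbs hQ _ _ (idem_invmul hQ a) hbf
      have h7 : x * (a * (inv b * b)) = x * a := by
        rw [← mul_assoc, hxy, mul_assoc, amul hQ]
      have haf : a * (inv b * b) ≠ 0 :=
        fun h => hne (by rw [← h7, h, mul_zero])
      have hvb : a * (inv b * b) = a := rightAbs hQ _ _ (idem_invmul hQ b) haf
      exact Or.inr ⟨b * inv a, a * inv b,
        by rw [mul_assoc]; exact hub,
        by rw [mul_assoc]; exact hvb⟩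
end

section
/- Let S be a left I-order in a primitive inverse semigroup Q with zero. Then S is a straight left I-order: every nonzero q ∈ Q can be written as q = a⁻¹b with a, b ∈ S and a R b in Q. -/
theorem stmt_10 {Q : Type*} [SemigroupWithZero Q] (inv : Q → Q)
    (hQ : IsPrimitiveInvSemigroup Q inv) (S : Set Q)
    (hS : IsLeftIOrder S inv) :
    ∀ q : Q, q ≠ 0 → ∃ a ∈ S, ∃ b ∈ S, q = inv a * b ∧ GreenR a b := by
  obtain ⟨⟨h1, h2, h3⟩, hprim⟩ := hQ
  intro q hq
  obtain ⟨a, ha, b, hb, hab⟩ := hS.2 q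
  refine ⟨a, ha, b, hb, hab, ?_⟩
  have hq' : inv a * b ≠ 0 := hab ▸ hq
  obtain ⟨e, he⟩ : ∃ e, e = a * inv a := ⟨_, rfl⟩
  obtain ⟨f, hf⟩ : ∃ f, f = b * inv b := ⟨_, rfl⟩
  have hee : e * e = e := by
    calc e * e = (a * inv a * a) * inv a := by rw [he]; simp only [mul_assoc]
    _ = e := by rw [h1 a, ← he]
  have hff : f * f = f := by
    calc f * f = (b * inv b * b) * inv b := by rw [hf]; simp only [mul_assoc]
    _ = f := by rw [h1 b, ← hf]
  have hcomm : e * f = f * e := h3 e f hee hff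
  -- inv a * b = inv a * (e * f) * b
  have hia : inv a * e = inv a := by
    rw [he, ← mul_assoc]; exact h2 a
  have hfb : f * b = b := by rw [hf]; exact h1 b
  have hkey : inv a * b = inv a * (e * f) * b := by
    rw [mul_assoc (inv a), mul_assoc e, hfb, ← mul_assoc, hia]
  have hef : e * f ≠ 0 := by
    intro h0
    apply hq'
    rw [hkey, h0, mul_zero, zero_mul]
  have hene : e ≠ 0 := by
    intro h0
    apply hef; rw [h0, zero_mul]
  have hfne : f ≠ 0 := by
    intro h0
    apply hef; rw [h0, mul_zero]
  have hgg : (e * f) * (e * f) = e * f := by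
    calc (e * f) * (e * f) = e * (f * e) * f := by simp only [mul_assoc]
    _ = e * (e * f) * f := by rw [hcomm]
    _ = (e * e) * (f * f) := by simp only [mul_assoc]
    _ = e * f := by rw [hee, hff]
  have hge : e * f = 0 ∨ e * f = e := by
    refine hprim e hee hene (e * f) hgg ?_ ?_
    · calc e * (e * f) = (e * e) * f := (mul_assoc e e f).symm
      _ = e * f := by rw [hee]
    · calc e * f * e = e * (f * e) := by rw [mul_assoc]
      _ = e * (e * f) := by rw [hcomm]
      _ = (e * e) * f := by rw [mul_assoc]
      _ = e * f := by rw [hee]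
  have hgf : e * f = 0 ∨ e * f = f := by
    refine hprim f hff hfne (e * f) hgg ?_ ?_
    · calc f * (e * f) = (f * e) * f := by rw [mul_assoc]
      _ = (e * f) * f := by rw [hcomm]
      _ = e * (f * f) := by rw [mul_assoc]
      _ = e * f := by rw [hff]
    · calc (e * f) * f = e * (f * f) := mul_assoc e f f
      _ = e * f := by rw [hff]
  have hefe : e * f = e := (hge.resolve_left hef)
  have heff : e * f = f := (hgf.resolve_left hef)
  have hEF : e = f := by rw [← hefe, heff]
  -- now a R b
  right
  refine ⟨inv a * b, inv b * a, ?_, ?_⟩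
  · calc a * (inv a * b) = e * b := by rw [he, mul_assoc]
    _ = f * b := by rw [hEF]
    _ = b := hfb
  · calc b * (inv b * a) = f * a := by rw [hf, mul_assoc]
    _ = e * a := by rw [hEF]
    _ = a := by rw [he]; exact h1 a
end

section
/- Let S be a left I-order in a primitive inverse semigroup Q with zero. Then Sa ≠ {0} for every nonzero a ∈ S. -/
theorem stmt_11 {Q : Type*} [SemigroupWithZero Q] (inv : Q → Q)
    (hQ : IsPrimitiveInvSemigroup Q inv) (S : Set Q)
    (hS : IsLeftIOrder S inv) :
    ∀ a ∈ S, a ≠ 0 → ∃ x ∈ S, x * a ≠ 0 := by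
  intro a _ ha
  obtain ⟨b, _, c, hc, hinv⟩ := hS.2 (inv a)
  refine ⟨c, hc, fun h0 => ha ?_⟩
  have key : a = a * inv b * (c * a) := by
    conv_lhs => rw [← hQ.1.1 a, hinv]
    simp [mul_assoc]
  rw [key, h0, mul_zero]
end

section
/- Let S be a left I-order in a primitive inverse semigroup Q with zero. Then for a, b ∈ S, a R b in Q if and only if a R* b in S. -/
/-- In a primitive inverse semigroup, distinct nonzero idempotents multiply to zero. -/
lemma prim_idem {Q : Type*} [SemigroupWithZero Q] (inv : Q → Q)
    (hQ : IsPrimitiveInvSemigroup Q inv) {e f : Q}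
    (he : e * e = e) (hf : f * f = f) (hne : e * f ≠ 0) : e = f := by
  obtain ⟨⟨h1, h2, hcom⟩, hprim⟩ := hQ
  have hc := hcom e f he hf
  have he0 : e ≠ 0 := fun h => hne (by rw [h, zero_mul])
  have hf0 : f ≠ 0 := fun h => hne (by rw [h, mul_zero])
  have hidem : (e * f) * (e * f) = e * f := by
    calc (e * f) * (e * f) = e * ((f * e) * f) := by simp only [mul_assoc]
    _ = e * ((e * f) * f) := by rw [← hc]
    _ = (e * e) * (f * f) := by simp only [mul_assoc]
    _ = e * f := by rw [he, hf]
  have h3 : e * (e * f) = e * f := by rw [← mul_assoc, he]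
  have h4 : (e * f) * e = e * f := by rw [hc, mul_assoc, he, ← hc]
  have h5 : f * (e * f) = e * f := by rw [hc, ← mul_assoc, hf]
  have h6 : (e * f) * f = e * f := by rw [mul_assoc, hf]
  rcases hprim e he he0 (e * f) hidem h3 h4 with h | h
  · exact absurd h hne
  rcases hprim f hf hf0 (e * f) hidem h5 h6 with h' | h'
  · exact absurd h' hne
  exact h.symm.trans h'

theorem stmt_12 {Q : Type*} [SemigroupWithZero Q] (inv : Q → Q)
    (hQ : IsPrimitiveInvSemigroup Q inv) (S : Set Q)
    (hS : IsLeftIOrder S inv) :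
    ∀ a ∈ S, ∀ b ∈ S, (GreenR a b ↔ RStarOn S a b) := by
  obtain ⟨h1, h2, hcom⟩ := hQ.1
  obtain ⟨hsub, hio⟩ := hS
  intro a ha b hb
  constructor
  · rintro (rfl | ⟨u, v, hu, hv⟩)
    · exact ⟨fun _ _ _ _ => Iff.rfl, fun _ _ => Iff.rfl, fun _ _ => Iff.rfl⟩
    · refine ⟨fun x _ y _ => ⟨fun h => ?_, fun h => ?_⟩,
        fun x _ => ⟨fun h => ?_, fun h => ?_⟩,
        fun y _ => ⟨fun h => ?_, fun h => ?_⟩⟩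
      · rw [← hu, ← mul_assoc, h, mul_assoc]
      · rw [← hv, ← mul_assoc, h, mul_assoc]
      · rw [← hu, ← mul_assoc, h]
      · rw [← hv, ← mul_assoc, h]
      · calc b = a * u := hu.symm
          _ = (y * a) * u := by rw [← h]
          _ = y * (a * u) := mul_assoc _ _ _
          _ = y * b := by rw [hu]
      · calc a = b * v := hv.symm
          _ = (y * b) * v := by rw [← h]
          _ = y * (b * v) := mul_assoc _ _ _
          _ = y * a := by rw [hv]
  · rintro ⟨hc1, hc2, hc3⟩
    by_cases ha0 : a = 0
    · subst ha0
      left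
      have hxb : ∀ x ∈ S, x * b = b := fun x hx => (hc2 x hx).mp (mul_zero x)
      have hyb : ∀ y ∈ S, b = y * b := fun y hy => (hc3 y hy).mp (mul_zero y).symm
      by_contra hb0
      have hb0' : b ≠ 0 := fun h => hb0 h.symm
      obtain ⟨c, hcS, d, hdS, h0⟩ := hio 0
      have e1 : inv c * b = 0 := by
        calc inv c * b = inv c * (d * b) := by rw [hxb d hdS]
        _ = (inv c * d) * b := by rw [mul_assoc]
        _ = 0 := by rw [← h0, zero_mul]
      have key : c * (inv c * b) = b := by
        conv_lhs => rw [hyb c hcS]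
        rw [← mul_assoc, ← mul_assoc, h1 c, ← hyb c hcS]
      rw [e1, mul_zero] at key
      exact hb0' key.symm
    · by_cases hb0 : b = 0
      · exfalso
        subst hb0
        have hxa : ∀ x ∈ S, x * a = a := fun x hx => (hc2 x hx).mpr (mul_zero x)
        have hya : ∀ y ∈ S, a = y * a := fun y hy => (hc3 y hy).mpr (mul_zero y).symm
        obtain ⟨c, hcS, d, hdS, h0⟩ := hio 0
        have e1 : inv c * a = 0 := by
          calc inv c * a = inv c * (d * a) := by rw [hxa d hdS]
          _ = (inv c * d) * a := by rw [mul_assoc]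
          _ = 0 := by rw [← h0, zero_mul]
        have key : c * (inv c * a) = a := by
          conv_lhs => rw [hya c hcS]
          rw [← mul_assoc, ← mul_assoc, h1 c, ← hya c hcS]
        rw [e1, mul_zero] at key
        exact ha0 key.symm
      · -- both nonzero
        set e := a * inv a with he_def
        set f := b * inv b with hf_def
        have hea : e * a = a := h1 a
        have hfb : f * b = b := h1 b
        have hee : e * e = e := by
          calc (a * inv a) * (a * inv a) = ((a * inv a) * a) * inv a :=
                (mul_assoc _ _ _).symm
          _ = a * inv a := by rw [h1 a]
        have hff : f * f = f := by
          calc (b * inv b) * (b * inv b) = ((b * inv b) * b) * inv b :=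
                (mul_assoc _ _ _).symm
          _ = b * inv b := by rw [h1 b]
        have he0 : e ≠ 0 := fun h => ha0 (by rw [← hea, h, zero_mul])
        have hf0 : f ≠ 0 := fun h => hb0 (by rw [← hfb, h, zero_mul])
        by_cases hef : e = f
        · right
          refine ⟨inv a * b, inv b * a, ?_, ?_⟩
          · rw [← mul_assoc, ← he_def, hef, hfb]
          · rw [← mul_assoc, ← hf_def, ← hef, hea]
        · exfalso
          have dich : ∀ x : Q, x * a = 0 ∨ x * b = 0 := by
            intro x
            by_contra h
            push_neg at h
            obtain ⟨hxa, hxb⟩ := h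
            have hgg : (inv x * x) * (inv x * x) = inv x * x := by
              rw [mul_assoc, ← mul_assoc x (inv x) x, h1 x]
            have hg0 : inv x * x ≠ 0 := by
              intro h
              apply hxa
              calc x * a = x * ((inv x * x) * a) := by
                    rw [← mul_assoc, ← mul_assoc, h1 x]
              _ = 0 := by rw [h, zero_mul, mul_zero]
            have hxg : x * (inv x * x) = x := by rw [← mul_assoc, h1 x]
            have hge : (inv x * x) * e ≠ 0 := by
              intro h
              apply hxa
              calc x * a = x * (((inv x * x) * e) * a) := by
                    rw [mul_assoc, hea, ← mul_assoc, ← mul_assoc, h1 x]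
              _ = 0 := by rw [h, zero_mul, mul_zero]
            have hgf : (inv x * x) * f ≠ 0 := by
              intro h
              apply hxb
              calc x * b = x * (((inv x * x) * f) * b) := by
                    rw [mul_assoc, hfb, ← mul_assoc, ← mul_assoc, h1 x]
              _ = 0 := by rw [h, zero_mul, mul_zero]
            exact hef ((prim_idem inv hQ hgg hee hge).symm.trans
              (prim_idem inv hQ hgg hff hgf))
          obtain ⟨c, hcS, d, hdS, hacd⟩ := hio a
          have hd0 : d ≠ 0 := fun h => ha0 (by rw [hacd, h, mul_zero])
          have hec : (c * inv c) * (c * inv c) = c * inv c := by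
            calc (c * inv c) * (c * inv c) = ((c * inv c) * c) * inv c :=
                  (mul_assoc _ _ _).symm
            _ = c * inv c := by rw [h1 c]
          have hfd : (d * inv d) * (d * inv d) = d * inv d := by
            calc (d * inv d) * (d * inv d) = ((d * inv d) * d) * inv d :=
                  (mul_assoc _ _ _).symm
            _ = d * inv d := by rw [h1 d]
          have hne : (c * inv c) * (d * inv d) ≠ 0 := by
            intro h
            apply ha0
            calc a = inv c * d := hacd
            _ = (inv c * (c * inv c)) * ((d * inv d) * d) := by
                  rw [← mul_assoc (inv c) c (inv c), h2 c, h1 d]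
            _ = inv c * (((c * inv c) * (d * inv d)) * d) := by
                  simp only [mul_assoc]
            _ = 0 := by rw [h, zero_mul, mul_zero]
          have hcd_eq : c * inv c = d * inv d := prim_idem inv hQ hec hfd hne
          have hca : c * a = d := by
            calc c * a = (c * inv c) * d := by rw [hacd, ← mul_assoc]
            _ = (d * inv d) * d := by rw [hcd_eq]
            _ = d := h1 d
          have hcb : c * b = 0 := by
            rcases dich c with h | h
            · exact absurd (hca ▸ h) hd0
            · exact h
          have hcd : c * d = d := by
            have hccb : (c * c) * b = c * b := by
              rw [mul_assoc, hcb, mul_zero]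
            have h' := (hc1 (c * c) (hsub c hcS c hcS) c hcS).mpr hccb
            rw [mul_assoc, hca] at h'
            exact h'
          have hdd : d * d = d := by
            have hdcb : (d * c) * b = c * b := by
              rw [mul_assoc, hcb, mul_zero]
            have h' := (hc1 (d * c) (hsub d hdS c hcS) c hcS).mpr hdcb
            rw [mul_assoc, hca] at h'
            exact h'
          by_cases hdb : d * b = 0
          · have h' := (hc1 c hcS d hdS).mpr (by rw [hcb, hdb])
            have hda : d * a = d := by rw [← h', hca]
            have hde : d * e ≠ 0 := by
              intro h
              apply hd0
              rw [← hda, ← hea, ← mul_assoc, h, zero_mul]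
            have hde' : d = e := prim_idem inv hQ hdd hee hde
            have had : a = d := by
              calc a = e * a := hea.symm
              _ = d * a := by rw [← hde']
              _ = d := hda
            have hcbb : c * b = b := (hc2 c hcS).mp (by rw [hca, ← had])
            exact hb0 (by rw [← hcbb, hcb])
          · have hdf : d * f ≠ 0 := by
              intro h
              apply hdb
              rw [← hfb, ← mul_assoc, h, zero_mul]
            have hdf' : d = f := prim_idem inv hQ hdd hff hdf
            apply hdb
            calc d * b = (c * d) * b := by rw [hcd]
            _ = c * (d * b) := by rw [mul_assoc]
            _ = c * (f * b) := by rw [hdf']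
            _ = c * b := by rw [hfb]
            _ = 0 := hcb
end

section
/- Let S be a left I-order in a primitive inverse semigroup Q with zero. Define a ρ b on S by a = b = 0 or aS ∩ bS ≠ {0}. Then ρ ⊆ R*. -/
theorem aux_key {Q : Type*} [SemigroupWithZero Q] (inv : Q → Q)
    (hQ : IsPrimitiveInvSemigroup Q inv) :
    ∀ a x : Q, a * x ≠ 0 → a * (x * inv x) = a := by
  obtain ⟨⟨h1, h2, h3⟩, hprim⟩ := hQ
  have idemmul : ∀ e f : Q, e * e = e → f * f = f → (e * f) * (e * f) = e * f := by
    intro e f hee hff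
    have hc := h3 e f hee hff
    simp only [mul_assoc]
    rw [← mul_assoc f e f, ← hc]
    simp only [mul_assoc]
    rw [hff, ← mul_assoc, hee]
  intro a x hax
  have hee : (inv a * a) * (inv a * a) = inv a * a := by rw [← mul_assoc, h2]
  have hff : (x * inv x) * (x * inv x) = x * inv x := by rw [← mul_assoc, h1]
  have hae : a * (inv a * a) = a := by rw [← mul_assoc, h1]
  have hene : inv a * a ≠ 0 := by
    intro h0
    apply hax
    have ha0 : a = 0 := by rw [← hae, h0, mul_zero]
    rw [ha0, zero_mul]
  have hc := h3 _ _ hee hff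
  have hefidem := idemmul _ _ hee hff
  have h1' : (inv a * a) * ((inv a * a) * (x * inv x)) = (inv a * a) * (x * inv x) := by
    rw [← mul_assoc, hee]
  have h2' : ((inv a * a) * (x * inv x)) * (inv a * a) = (inv a * a) * (x * inv x) := by
    rw [hc, mul_assoc, hee, ← hc]
  have hafx : (a * (x * inv x)) * x = a * x := by
    simp only [mul_assoc]
    rw [← mul_assoc x (inv x) x, h1]
  have hafne : a * (x * inv x) ≠ 0 := by
    intro h0; apply hax; rw [← hafx, h0, zero_mul]
  have haef : a * ((inv a * a) * (x * inv x)) = a * (x * inv x) := by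
    rw [← mul_assoc, hae]
  have hefne : (inv a * a) * (x * inv x) ≠ 0 := by
    intro h0; apply hafne; rw [← haef, h0, mul_zero]
  rcases hprim _ hee hene _ hefidem h1' h2' with h0 | heq
  · exact absurd h0 hefne
  · rw [← haef, heq, hae]

theorem stmt_13 {Q : Type*} [SemigroupWithZero Q] (inv : Q → Q)
    (hQ : IsPrimitiveInvSemigroup Q inv) (S : Set Q)
    (hS : IsLeftIOrder S inv) :
    ∀ a ∈ S, ∀ b ∈ S, RhoOn S a b → RStarOn S a b := by
  intro a ha b hb hrho
  rcases hrho with ⟨ha0, hb0⟩ | ⟨x, hx, y, hy, hxy, hne⟩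
  · subst ha0; subst hb0
    exact ⟨fun _ _ _ _ => Iff.rfl, fun _ _ => Iff.rfl, fun _ _ => Iff.rfl⟩
  · have hbyne : b * y ≠ 0 := by rw [← hxy]; exact hne
    have hb' : b * (y * inv y) = b := aux_key inv hQ b y hbyne
    have ha' : a * (x * inv x) = a := aux_key inv hQ a x hne
    have hbeq : b = a * (x * inv y) := by
      rw [← mul_assoc, hxy, mul_assoc, hb']
    have haeq : a = b * (y * inv x) := by
      rw [← mul_assoc, ← hxy, mul_assoc, ha']
    have fwd : ∀ u v : Q, u * a = v * a → u * b = v * b := by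
      intro u v h
      rw [hbeq, ← mul_assoc, h, mul_assoc]
    have bwd : ∀ u v : Q, u * b = v * b → u * a = v * a := by
      intro u v h
      rw [haeq, ← mul_assoc, h, mul_assoc]
    have fwd1 : ∀ u : Q, u * a = a → u * b = b := by
      intro u h
      conv_lhs => rw [hbeq, ← mul_assoc, h, ← hbeq]
    have bwd1 : ∀ u : Q, u * b = b → u * a = a := by
      intro u h
      conv_lhs => rw [haeq, ← mul_assoc, h, ← haeq]
    refine ⟨fun u _ v _ => ⟨fwd u v, bwd u v⟩,
      fun u _ => ⟨fwd1 u, bwd1 u⟩,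
      fun v _ => ⟨fun h => (fwd1 v h.symm).symm, fun h => (bwd1 v h.symm).symm⟩⟩
end

section
/- Let S be a left I-order in a primitive inverse semigroup Q with zero. If a⁻¹b and c⁻¹d are nonzero elements of Q with a,b,c,d ∈ S, then a⁻¹b R c⁻¹d in Q if and only if a λ c in S, and a⁻¹b L c⁻¹d in Q if and only if b λ d in S. -/
section AuxLemmas

variable {Q : Type*} [SemigroupWithZero Q] {inv : Q → Q}

theorem aux_idem_r (h : IsInverseSemigroup Q inv) (a : Q) :
    (a * inv a) * (a * inv a) = a * inv a := by
  rw [← mul_assoc, h.1 a]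

theorem aux_idem_l (h : IsInverseSemigroup Q inv) (a : Q) :
    (inv a * a) * (inv a * a) = inv a * a := by
  rw [← mul_assoc, h.2.1 a]

theorem aux_inv_unique (h : IsInverseSemigroup Q inv) {a x : Q}
    (h1 : a * x * a = a) (h2 : x * a * x = x) : x = inv a := by
  have hax : (a * x) * (a * x) = a * x := by rw [← mul_assoc, h1]
  have hxa : (x * a) * (x * a) = x * a := by rw [← mul_assoc, h2]
  have hx : x * a * inv a = x := by
    calc x * a * inv a = (x * a * x) * a * inv a := by rw [h2]
      _ = x * ((a * x) * (a * inv a)) := by simp only [mul_assoc]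
      _ = x * ((a * inv a) * (a * x)) := by rw [h.2.2 _ _ hax (aux_idem_r h a)]
      _ = x * (a * inv a * a) * x := by simp only [mul_assoc]
      _ = x * a * x := by rw [h.1 a]
      _ = x := h2
  have hi : inv a = x * a * inv a := by
    calc inv a = inv a * a * inv a := (h.2.1 a).symm
      _ = inv a * (a * x * a) * inv a := by rw [h1]
      _ = ((inv a * a) * (x * a)) * inv a := by simp only [mul_assoc]
      _ = ((x * a) * (inv a * a)) * inv a := by rw [h.2.2 _ _ (aux_idem_l h a) hxa]
      _ = (x * a) * (inv a * a * inv a) := by simp only [mul_assoc]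
      _ = x * a * inv a := by rw [h.2.1 a]
  exact hx.symm.trans hi.symm

theorem aux_inv_inv (h : IsInverseSemigroup Q inv) (a : Q) : inv (inv a) = a :=
  (aux_inv_unique h (h.2.1 a) (h.1 a)).symm

theorem aux_inv_mul (h : IsInverseSemigroup Q inv) (a b : Q) :
    inv (a * b) = inv b * inv a := by
  have h1 : (a * b) * (inv b * inv a) * (a * b) = a * b := by
    calc (a * b) * (inv b * inv a) * (a * b)
        = a * ((b * inv b) * (inv a * a)) * b := by simp only [mul_assoc]
      _ = a * ((inv a * a) * (b * inv b)) * b := by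
          rw [h.2.2 _ _ (aux_idem_r h b) (aux_idem_l h a)]
      _ = (a * inv a * a) * (b * inv b * b) := by simp only [mul_assoc]
      _ = a * b := by rw [h.1 a, h.1 b]
  have h2 : (inv b * inv a) * (a * b) * (inv b * inv a) = inv b * inv a := by
    calc (inv b * inv a) * (a * b) * (inv b * inv a)
        = inv b * ((inv a * a) * (b * inv b)) * inv a := by simp only [mul_assoc]
      _ = inv b * ((b * inv b) * (inv a * a)) * inv a := by
          rw [h.2.2 _ _ (aux_idem_l h a) (aux_idem_r h b)]
      _ = (inv b * b * inv b) * (inv a * a * inv a) := by simp only [mul_assoc]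
      _ = inv b * inv a := by rw [h.2.1 a, h.2.1 b]
  exact (aux_inv_unique h h1 h2).symm

theorem aux_ne_r (h : IsInverseSemigroup Q inv) {a : Q} (ha : a ≠ 0) :
    a * inv a ≠ 0 := fun h0 => ha (by rw [← h.1 a, h0, zero_mul])

theorem aux_ne_l (h : IsInverseSemigroup Q inv) {a : Q} (ha : a ≠ 0) :
    inv a * a ≠ 0 := fun h0 => ha (by rw [← h.1 a, mul_assoc, h0, mul_zero])

theorem aux_idem_eq (hP : IsPrimitiveInvSemigroup Q inv) {e f : Q}
    (he : e * e = e) (hf : f * f = f) (he0 : e ≠ 0) (hf0 : f ≠ 0)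
    (hef : e * f ≠ 0) : e = f := by
  have h := hP.1
  have hcomm := h.2.2 e f he hf
  have hg : (e * f) * (e * f) = e * f := by
    calc (e * f) * (e * f) = e * ((f * e) * f) := by simp only [mul_assoc]
      _ = e * ((e * f) * f) := by rw [← hcomm]
      _ = (e * e) * (f * f) := by simp only [mul_assoc]
      _ = e * f := by rw [he, hf]
  have h1 : e * (e * f) = e * f := by rw [← mul_assoc, he]
  have h2 : (e * f) * e = e * f := by
    calc (e * f) * e = e * (f * e) := by simp only [mul_assoc]
      _ = e * (e * f) := by rw [← hcomm]
      _ = e * f := h1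
  have h3 : f * (e * f) = e * f := by
    calc f * (e * f) = (f * e) * f := by simp only [mul_assoc]
      _ = (e * f) * f := by rw [← hcomm]
      _ = e * (f * f) := by simp only [mul_assoc]
      _ = e * f := by rw [hf]
  have h4 : (e * f) * f = e * f := by rw [mul_assoc, hf]
  rcases hP.2 e he he0 (e * f) hg h1 h2 with h5 | h5
  · exact absurd h5 hef
  rcases hP.2 f hf hf0 (e * f) hg h3 h4 with h6 | h6
  · exact absurd h6 hef
  exact h5.symm.trans h6

theorem aux_key_s14 (hP : IsPrimitiveInvSemigroup Q inv) {x y : Q}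
    (hxy : x * y ≠ 0) : inv x * x = y * inv y := by
  have h := hP.1
  have hx0 : x ≠ 0 := fun h0 => hxy (by rw [h0, zero_mul])
  have hy0 : y ≠ 0 := fun h0 => hxy (by rw [h0, mul_zero])
  apply aux_idem_eq hP (aux_idem_l h x) (aux_idem_r h y) (aux_ne_l h hx0) (aux_ne_r h hy0)
  intro h0
  apply hxy
  have he : x * y = x * ((inv x * x) * (y * inv y)) * y := by
    calc x * y = (x * inv x * x) * (y * inv y * y) := by rw [h.1 x, h.1 y]
      _ = x * ((inv x * x) * (y * inv y)) * y := by simp only [mul_assoc]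
  rw [he, h0, mul_zero, zero_mul]

theorem aux_greenR_iff (h : IsInverseSemigroup Q inv) {x y : Q} :
    GreenR x y ↔ x * inv x = y * inv y := by
  constructor
  · rintro (rfl | ⟨u, v, hu, hv⟩)
    · rfl
    have e1 : (x * inv x) * (y * inv y) = y * inv y := by
      calc (x * inv x) * (y * inv y) = (x * inv x) * ((x * u) * inv y) := by rw [hu]
        _ = (x * inv x * x) * (u * inv y) := by simp only [mul_assoc]
        _ = x * (u * inv y) := by rw [h.1 x]
        _ = (x * u) * inv y := by simp only [mul_assoc]
        _ = y * inv y := by rw [hu]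
    have e2 : (y * inv y) * (x * inv x) = x * inv x := by
      calc (y * inv y) * (x * inv x) = (y * inv y) * ((y * v) * inv x) := by rw [hv]
        _ = (y * inv y * y) * (v * inv x) := by simp only [mul_assoc]
        _ = y * (v * inv x) := by rw [h.1 y]
        _ = (y * v) * inv x := by simp only [mul_assoc]
        _ = x * inv x := by rw [hv]
    calc x * inv x = (y * inv y) * (x * inv x) := e2.symm
      _ = (x * inv x) * (y * inv y) := (h.2.2 _ _ (aux_idem_r h x) (aux_idem_r h y)).symm
      _ = y * inv y := e1
  · intro heq
    right
    refine ⟨inv x * y, inv y * x, ?_, ?_⟩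
    · calc x * (inv x * y) = (x * inv x) * y := (mul_assoc _ _ _).symm
        _ = (y * inv y) * y := by rw [heq]
        _ = y := h.1 y
    · calc y * (inv y * x) = (y * inv y) * x := (mul_assoc _ _ _).symm
        _ = (x * inv x) * x := by rw [← heq]
        _ = x := h.1 x

theorem aux_greenL_iff (h : IsInverseSemigroup Q inv) {x y : Q} :
    GreenL x y ↔ inv x * x = inv y * y := by
  constructor
  · rintro (rfl | ⟨u, v, hu, hv⟩)
    · rfl
    have e1 : (inv y * y) * (inv x * x) = inv y * y := by
      calc (inv y * y) * (inv x * x) = (inv y * (u * x)) * (inv x * x) := by rw [hu]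
        _ = (inv y * u) * (x * inv x * x) := by simp only [mul_assoc]
        _ = (inv y * u) * x := by rw [h.1 x]
        _ = inv y * (u * x) := by simp only [mul_assoc]
        _ = inv y * y := by rw [hu]
    have e2 : (inv x * x) * (inv y * y) = inv x * x := by
      calc (inv x * x) * (inv y * y) = (inv x * (v * y)) * (inv y * y) := by rw [hv]
        _ = (inv x * v) * (y * inv y * y) := by simp only [mul_assoc]
        _ = (inv x * v) * y := by rw [h.1 y]
        _ = inv x * (v * y) := by simp only [mul_assoc]
        _ = inv x * x := by rw [hv]
    calc inv x * x = (inv x * x) * (inv y * y) := e2.symm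
      _ = (inv y * y) * (inv x * x) := h.2.2 _ _ (aux_idem_l h x) (aux_idem_l h y)
      _ = inv y * y := e1
  · intro heq
    right
    refine ⟨y * inv x, x * inv y, ?_, ?_⟩
    · calc (y * inv x) * x = y * (inv x * x) := mul_assoc _ _ _
        _ = y * (inv y * y) := by rw [heq]
        _ = y := by rw [← mul_assoc, h.1 y]
    · calc (x * inv y) * y = x * (inv y * y) := mul_assoc _ _ _
        _ = x * (inv x * x) := by rw [← heq]
        _ = x := by rw [← mul_assoc, h.1 x]

theorem aux_lam_iff (hP : IsPrimitiveInvSemigroup Q inv) {S : Set Q}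
    (hS : IsLeftIOrder S inv) {a c : Q} (ha : a ∈ S) (hc : c ∈ S)
    (ha0 : a ≠ 0) (hc0 : c ≠ 0) :
    LamOn S a c ↔ inv a * a = inv c * c := by
  have h := hP.1
  constructor
  · rintro (⟨h1, _⟩ | ⟨x, hx, y, hy, hxy, hne⟩)
    · exact absurd h1 ha0
    have k1 : inv x * x = a * inv a := aux_key_s14 hP hne
    have hne2 : y * c ≠ 0 := by rw [← hxy]; exact hne
    have k2 : inv y * y = c * inv c := aux_key_s14 hP hne2
    have e1 : (inv a * inv x) * (x * a) = inv a * a := by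
      calc (inv a * inv x) * (x * a) = inv a * ((inv x * x) * a) := by simp only [mul_assoc]
        _ = inv a * ((a * inv a) * a) := by rw [k1]
        _ = inv a * a := by rw [h.1 a]
    have e2 : (inv c * inv y) * (y * c) = inv c * c := by
      calc (inv c * inv y) * (y * c) = inv c * ((inv y * y) * c) := by simp only [mul_assoc]
        _ = inv c * ((c * inv c) * c) := by rw [k2]
        _ = inv c * c := by rw [h.1 c]
    calc inv a * a = (inv a * inv x) * (x * a) := e1.symm
      _ = inv (x * a) * (x * a) := by rw [aux_inv_mul h x a]
      _ = inv (y * c) * (y * c) := by rw [hxy]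
      _ = (inv c * inv y) * (y * c) := by rw [aux_inv_mul h y c]
      _ = inv c * c := e2
  · intro heq
    have e3 : (a * inv c) * (c * inv a) = a * inv a := by
      calc (a * inv c) * (c * inv a) = a * ((inv c * c) * inv a) := by simp only [mul_assoc]
        _ = a * ((inv a * a) * inv a) := by rw [heq]
        _ = a * inv a := by rw [h.2.1 a]
    have hq0 : a * inv c ≠ 0 :=
      fun h0 => aux_ne_r h ha0 (by rw [← e3, h0, zero_mul])
    obtain ⟨x, hx, y, hy, hq⟩ := hS.2 (a * inv c)
    have hy0 : y ≠ 0 := by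
      intro h0; apply hq0; rw [hq, h0, mul_zero]
    have hq0' : inv x * y ≠ 0 := by rw [← hq]; exact hq0
    have k3 : x * inv x = y * inv y := by
      have hk := aux_key_s14 hP hq0'
      rwa [aux_inv_inv h x] at hk
    have e4 : x * (a * inv c) = y := by
      calc x * (a * inv c) = x * (inv x * y) := by rw [hq]
        _ = (x * inv x) * y := by rw [← mul_assoc]
        _ = (y * inv y) * y := by rw [k3]
        _ = y := h.1 y
    have hxy : x * a = y * c := by
      calc x * a = x * (a * inv a * a) := by rw [h.1 a]
        _ = x * (a * (inv a * a)) := by simp only [mul_assoc]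
        _ = x * (a * (inv c * c)) := by rw [heq]
        _ = (x * (a * inv c)) * c := by simp only [mul_assoc]
        _ = y * c := by rw [e4]
    have hne : x * a ≠ 0 := by
      intro h0
      apply hy0
      calc y = x * (a * inv c) := e4.symm
        _ = (x * a) * inv c := by rw [← mul_assoc]
        _ = 0 := by rw [h0, zero_mul]
    exact Or.inr ⟨x, hx, y, hy, hxy, hne⟩

end AuxLemmas

theorem stmt_14 {Q : Type*} [SemigroupWithZero Q] (inv : Q → Q)
    (hQ : IsPrimitiveInvSemigroup Q inv) (S : Set Q)
    (hS : IsLeftIOrder S inv) :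
    ∀ a ∈ S, ∀ b ∈ S, ∀ c ∈ S, ∀ d ∈ S,
      inv a * b ≠ 0 → inv c * d ≠ 0 →
      ((GreenR (inv a * b) (inv c * d) ↔ LamOn S a c) ∧
       (GreenL (inv a * b) (inv c * d) ↔ LamOn S b d)) := by
  intro a ha b hb c hc d hd hab hcd
  have h := hQ.1
  have hb0 : b ≠ 0 := fun h0 => hab (by rw [h0, mul_zero])
  have hd0 : d ≠ 0 := fun h0 => hcd (by rw [h0, mul_zero])
  have kab : a * inv a = b * inv b := by
    have hk := aux_key_s14 hQ hab
    rwa [aux_inv_inv h a] at hk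
  have kcd : c * inv c = d * inv d := by
    have hk := aux_key_s14 hQ hcd
    rwa [aux_inv_inv h c] at hk
  have ha0 : a ≠ 0 := by
    intro h0
    apply hb0
    have hz : b * inv b = 0 := by rw [← kab, h0, zero_mul]
    calc b = b * inv b * b := (h.1 b).symm
      _ = 0 := by rw [hz, zero_mul]
  have hc0 : c ≠ 0 := by
    intro h0
    apply hd0
    have hz : d * inv d = 0 := by rw [← kcd, h0, zero_mul]
    calc d = d * inv d * d := (h.1 d).symm
      _ = 0 := by rw [hz, zero_mul]
  have rr : (inv a * b) * inv (inv a * b) = inv a * a := by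
    calc (inv a * b) * inv (inv a * b)
        = (inv a * b) * (inv b * inv (inv a)) := by rw [aux_inv_mul h (inv a) b]
      _ = (inv a * b) * (inv b * a) := by rw [aux_inv_inv h a]
      _ = inv a * ((b * inv b) * a) := by simp only [mul_assoc]
      _ = inv a * ((a * inv a) * a) := by rw [← kab]
      _ = inv a * a := by rw [h.1 a]
  have rc : (inv c * d) * inv (inv c * d) = inv c * c := by
    calc (inv c * d) * inv (inv c * d)
        = (inv c * d) * (inv d * inv (inv c)) := by rw [aux_inv_mul h (inv c) d]
      _ = (inv c * d) * (inv d * c) := by rw [aux_inv_inv h c]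
      _ = inv c * ((d * inv d) * c) := by simp only [mul_assoc]
      _ = inv c * ((c * inv c) * c) := by rw [← kcd]
      _ = inv c * c := by rw [h.1 c]
  have ll : inv (inv a * b) * (inv a * b) = inv b * b := by
    calc inv (inv a * b) * (inv a * b)
        = (inv b * inv (inv a)) * (inv a * b) := by rw [aux_inv_mul h (inv a) b]
      _ = (inv b * a) * (inv a * b) := by rw [aux_inv_inv h a]
      _ = inv b * ((a * inv a) * b) := by simp only [mul_assoc]
      _ = inv b * ((b * inv b) * b) := by rw [kab]
      _ = inv b * b := by rw [h.1 b]
  have lc : inv (inv c * d) * (inv c * d) = inv d * d := by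
    calc inv (inv c * d) * (inv c * d)
        = (inv d * inv (inv c)) * (inv c * d) := by rw [aux_inv_mul h (inv c) d]
      _ = (inv d * c) * (inv c * d) := by rw [aux_inv_inv h c]
      _ = inv d * ((c * inv c) * d) := by simp only [mul_assoc]
      _ = inv d * ((d * inv d) * d) := by rw [kcd]
      _ = inv d * d := by rw [h.1 d]
  constructor
  · rw [aux_greenR_iff h, rr, rc, aux_lam_iff hQ hS ha hc ha0 hc0]
  · rw [aux_greenL_iff h, ll, lc, aux_lam_iff hQ hS hb hd hb0 hd0]
end

section
/- Let S be a semigroup with zero that is categorical at 0, is 0-cancellative, has λ transitive (where a λ b iff a = b = 0 or Sa ∩ Sb ≠ {0}), and satisfies Sa ≠ {0} for all nonzero a ∈ S. On Σ* = {(a,b) : a R* b, a,b ≠ 0} define (a,b) ∼ (c,d) iff there exist x,y ∈ S with xa = yc ≠ 0 and xb = yd ≠ 0, and let (0,0) form its own class. Then ∼ is an equivalence relation on Σ = Σ* ∪ {(0,0)}. -/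
theorem stmt_15 {S : Type*} [SemigroupWithZero S]
    (hcat : CategoricalAtZero S) (hcanc : ZeroCancellative S)
    (htrans : Transitive (Lam (S := S)))
    (hD : ∀ a : S, a ≠ 0 → ∃ x : S, x * a ≠ 0) :
    Equivalence (fun (p q : {p : S × S //
        (p.1 ≠ 0 ∧ p.2 ≠ 0 ∧ RStar p.1 p.2) ∨ (p.1 = 0 ∧ p.2 = 0)}) =>
      (p.val.1 = 0 ∧ p.val.2 = 0 ∧ q.val.1 = 0 ∧ q.val.2 = 0) ∨
      ∃ x y : S, x ≠ 0 ∧ y ≠ 0 ∧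
        x * p.val.1 = y * q.val.1 ∧ x * p.val.1 ≠ 0 ∧
        x * p.val.2 = y * q.val.2 ∧ x * p.val.2 ≠ 0) := by
  constructor
  · rintro ⟨⟨a, b⟩, hp⟩
    rcases hp with ⟨ha, hb, hR⟩ | ⟨ha, hb⟩
    · right
      obtain ⟨x, hx⟩ := hD a ha
      have hxb : x * b ≠ 0 := by
        intro h
        apply hx
        have h2 : (↑x : WithOne S) * ↑b = ↑(0 : S) * ↑b := by
          rw [← WithOne.coe_mul, ← WithOne.coe_mul, h, zero_mul]
        have h3 := (hR (↑x) (↑(0 : S))).mpr h2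
        rw [← WithOne.coe_mul, ← WithOne.coe_mul] at h3
        have h4 := WithOne.coe_inj.mp h3
        rwa [zero_mul] at h4
      have hx0 : x ≠ 0 := fun h => hx (by rw [h, zero_mul])
      exact ⟨x, x, hx0, hx0, rfl, hx, rfl, hxb⟩
    · exact Or.inl ⟨ha, hb, ha, hb⟩
  · rintro ⟨⟨a, b⟩, hp⟩ ⟨⟨c, d⟩, hq⟩ h
    rcases h with ⟨h1, h2, h3, h4⟩ | ⟨x, y, hx, hy, e1, n1, e2, n2⟩
    · exact Or.inl ⟨h3, h4, h1, h2⟩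
    · exact Or.inr ⟨y, x, hy, hx, e1.symm, e1 ▸ n1, e2.symm, e2 ▸ n2⟩
  · rintro ⟨⟨a, b⟩, hp⟩ ⟨⟨c, d⟩, hq⟩ ⟨⟨e, f⟩, hr⟩ h1 h2
    rcases h1 with ⟨ha, hb, hc, hd⟩ | ⟨x1, y1, hx1, hy1, e1, n1, e2, n2⟩
    · rcases h2 with ⟨_, _, he, hf⟩ | ⟨u, v, hu, hv, f1, m1, f2, m2⟩
      · exact Or.inl ⟨ha, hb, he, hf⟩
      · exact absurd (by rw [hc, mul_zero]) m1
    rcases h2 with ⟨hc, hd, he, hf⟩ | ⟨u, v, hu, hv, f1, m1, f2, m2⟩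
    · exact absurd (by rw [e1, hc, mul_zero]) n1
    right
    dsimp only at e1 n1 e2 n2 f1 m1 f2 m2 ⊢
    -- main case
    have nyc : y1 * c ≠ 0 := e1 ▸ n1
    have nuc : u * c ≠ 0 := m1
    obtain ⟨s0, hs0⟩ := hD (y1 * c) nyc
    obtain ⟨t0, ht0⟩ := hD (u * c) nuc
    have lam1 : Lam (y1 * c) c := Or.inr ⟨s0, s0 * y1, by rw [mul_assoc], hs0⟩
    have lam2 : Lam c (u * c) := Or.inr ⟨t0 * u, t0, by rw [mul_assoc], by rw [mul_assoc]; exact ht0⟩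
    rcases htrans lam1 lam2 with ⟨h0, _⟩ | ⟨s, t, hst, hstn⟩
    · exact absurd h0 nyc
    -- hst : s * (y1 * c) = t * (u * c), hstn : s * (y1 * c) ≠ 0
    have key : s * y1 = t * u := by
      apply hcanc.2 c
      · rw [mul_assoc, mul_assoc]; exact hst
      · rw [mul_assoc]; exact hstn
    have nsy : s * y1 ≠ 0 := fun h => hstn (by rw [← mul_assoc, h, zero_mul])
    have nyd : y1 * d ≠ 0 := e2 ▸ n2
    have nsyd : s * y1 * d ≠ 0 := hcat s y1 d nsy nyd
    refine ⟨s * x1, t * v, ?_, ?_, ?_, ?_, ?_, ?_⟩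
    · intro h
      apply hstn
      rw [← e1, ← mul_assoc, h, zero_mul]
    · intro h
      apply hstn
      rw [hst, f1, ← mul_assoc, h, zero_mul]
    · rw [mul_assoc, e1, hst, f1, ← mul_assoc]
    · rw [mul_assoc, e1]; exact hstn
    · rw [mul_assoc, e2, ← mul_assoc, key, mul_assoc, f2, ← mul_assoc]
    · rw [mul_assoc, e2, ← mul_assoc]; exact nsyd
end

section
/- Let S be a semigroup with zero which is categorical at 0 and 0-cancellative, and let a,b,c,d,s,t,x,y be nonzero elements of S satisfying sa = tc ≠ 0, sb = td ≠ 0, and xa = yc ≠ 0, where additionally sa λ xa (there exist w,z ∈ S with zsa = wxa ≠ 0). Then xb = yd ≠ 0. -/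
theorem stmt_16 {S : Type*} [SemigroupWithZero S]
    (hcat : CategoricalAtZero S) (hcanc : ZeroCancellative S)
    (a b c d s t x y : S)
    (ha : a ≠ 0) (hb : b ≠ 0) (hc : c ≠ 0) (hd : d ≠ 0)
    (hs : s ≠ 0) (ht : t ≠ 0) (hx : x ≠ 0) (hy : y ≠ 0)
    (h1 : s * a = t * c) (h1' : s * a ≠ 0)
    (h2 : s * b = t * d) (h2' : s * b ≠ 0)
    (h3 : x * a = y * c) (h3' : x * a ≠ 0)
    (hlam : ∃ w z : S, z * (s * a) = w * (x * a) ∧ z * (s * a) ≠ 0) :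
    x * b = y * d ∧ x * b ≠ 0 := by
  obtain ⟨w, z, heq, hne⟩ := hlam
  have heq' : (z * s) * a = (w * x) * a := by rw [mul_assoc, mul_assoc]; exact heq
  have hne' : (z * s) * a ≠ 0 := by rw [mul_assoc]; exact hne
  have hzs : z * s = w * x := hcanc.2 a (z * s) (w * x) heq' hne'
  have hzsne : z * s ≠ 0 := by
    intro h; apply hne'; rw [h, zero_mul]
  -- z * t = w * y
  have hzt : (z * t) * c = (w * y) * c := by
    rw [mul_assoc, ← h1, heq, mul_assoc, ← h3]
  have hztne : (z * t) * c ≠ 0 := by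
    rw [mul_assoc, ← h1]; exact hne
  have hzty : z * t = w * y := hcanc.2 c (z * t) (w * y) hzt hztne
  have hzsb : z * s * b ≠ 0 := hcat z s b hzsne h2'
  have key : w * (x * b) = w * (y * d) := by
    rw [← mul_assoc, ← mul_assoc, ← hzs, ← hzty, mul_assoc, mul_assoc, h2]
  have kne : w * (x * b) ≠ 0 := by
    rw [← mul_assoc, ← hzs]; exact hzsb
  have hxb : x * b = y * d := hcanc.1 w (x * b) (y * d) key kne
  refine ⟨hxb, ?_⟩
  intro h; apply kne; rw [h, mul_zero]
end

section
/- Let H be a left order in a group G (every element of G is of the form a⁻¹b with a,b ∈ H), let B = B(G,I) be the Brandt semigroup over G with index set I having |I| ≥ 2, and fix i ∈ I. Then S_i = {(i,h,j) : h ∈ H, j ∈ I} ∪ {0} is a subsemigroup of B and is a straight left I-order in B: every element of B is of the form s⁻¹t with s,t ∈ S_i. -/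
/-- The Brandt semigroup B(G,I): underlying set (I × G × I) ∪ {0}. -/
abbrev Brandt (G I : Type*) := Option (I × G × I)

instance {G I : Type*} [Group G] [DecidableEq I] : Mul (Brandt G I) :=
  ⟨fun a b =>
    match a, b with
    | some (i, g, j), some (k, h, l) => if j = k then some (i, g * h, l) else none
    | _, _ => none⟩

instance {G I : Type*} : Zero (Brandt G I) := ⟨none⟩

/-- The inverse map of the Brandt semigroup: (i,a,j)⁻¹ = (j,a⁻¹,i). -/
def Brandt.inv {G I : Type*} [Group G] : Brandt G I → Brandt G I
  | some (i, g, j) => some (j, g⁻¹, i)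
  | none => none

theorem stmt_18 {G I : Type*} [Group G] [DecidableEq I]
    (H : Set G) (Hmul : ∀ a ∈ H, ∀ b ∈ H, a * b ∈ H)
    (Horder : ∀ g : G, ∃ a ∈ H, ∃ b ∈ H, g = a⁻¹ * b)
    (hI : ∃ j k : I, j ≠ k) (i : I)
    (Si : Set (Brandt G I))
    (hSi : Si = {x | x = 0 ∨ ∃ h ∈ H, ∃ j : I, x = some (i, h, j)}) :
    (∀ a ∈ Si, ∀ b ∈ Si, a * b ∈ Si) ∧
    ∀ q : Brandt G I, ∃ s ∈ Si, ∃ t ∈ Si,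
      q = Brandt.inv s * t ∧ s * Brandt.inv s = t * Brandt.inv t := by
  subst hSi
  constructor
  · rintro a (rfl | ⟨h, hH, j, rfl⟩) b hb
    · left; rfl
    · rcases hb with rfl | ⟨h', hH', j', rfl⟩
      · exact Or.inl rfl
      · show (if j = i then some (i, h * h', j') else none) ∈ _
        by_cases hj : j = i
        · simp only [hj, if_pos rfl]
          exact Or.inr ⟨h * h', Hmul h hH h' hH', j', rfl⟩
        · simp only [if_neg hj]; left; rfl
  · intro q
    match q with
    | none =>
      refine ⟨0, Or.inl rfl, 0, Or.inl rfl, rfl, rfl⟩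
    | some (k, g, l) =>
      obtain ⟨a, ha, b, hb, hg⟩ := Horder g
      refine ⟨some (i, a, k), Or.inr ⟨a, ha, k, rfl⟩,
        some (i, b, l), Or.inr ⟨b, hb, l, rfl⟩, ?_, ?_⟩
      · show some (k, g, l) = (some (k, a⁻¹, i) : Brandt G I) * some (i, b, l)
        show some (k, g, l) = if i = i then some (k, a⁻¹ * b, l) else none
        rw [if_pos rfl, hg]
      · show (if k = k then some (i, a * a⁻¹, i) else none) =
          (if l = l then some (i, b * b⁻¹, i) else none : Brandt G I)
        simp
end

section
/- Let S be a primitive ample semigroup with zero. Then S is categorical at 0 if and only if for all nonzero a, b ∈ S: ab ≠ 0 ⟺ a* = b⁺. -/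
/-- The relation L* on a semigroup, defined via S¹ = WithOne S. -/
def LStar {S : Type*} [SemigroupWithZero S] (a b : S) : Prop :=
  ∀ x y : WithOne S, (a : WithOne S) * x = (a : WithOne S) * y ↔
    (b : WithOne S) * x = (b : WithOne S) * y

/-- `S` is an ample semigroup, with `plus a` the idempotent in the R*-class of `a`
and `star a` the idempotent in the L*-class of `a`. -/
def IsAmple (S : Type*) [SemigroupWithZero S] (plus star : S → S) : Prop :=
  (∀ a : S, plus a * plus a = plus a ∧ RStar a (plus a)) ∧
  (∀ a : S, star a * star a = star a ∧ LStar a (star a)) ∧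
  (∀ e f : S, e * e = e → f * f = f → e * f = f * e) ∧
  (∀ (a e : S), e * e = e → plus (a * e) * a = a * e) ∧
  (∀ (a e : S), e * e = e → a * star (e * a) = e * a)


section Aux
variable {S : Type*} [SemigroupWithZero S] {plus star : S → S}

lemma aux_plus_mul (h : IsAmple S plus star) (a : S) : plus a * a = a := by
  have h1 := (h.1 a).2 (plus a : WithOne S) 1
  simp only [one_mul] at h1
  have h2 : (plus a : WithOne S) * (plus a) = (plus a) := by
    rw [← WithOne.coe_mul, (h.1 a).1]
  have := h1.mpr h2
  rwa [← WithOne.coe_mul, WithOne.coe_inj] at this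

lemma aux_mul_star (h : IsAmple S plus star) (a : S) : a * star a = a := by
  have h1 := (h.2.1 a).2 (star a : WithOne S) 1
  simp only [mul_one] at h1
  have h2 : (star a : WithOne S) * (star a) = (star a) := by
    rw [← WithOne.coe_mul, (h.2.1 a).1]
  have := h1.mpr h2
  rwa [← WithOne.coe_mul, WithOne.coe_inj] at this

lemma aux_lstar_symm {a b : S} (h : LStar a b) : LStar b a := fun x y => (h x y).symm

lemma aux_lstar_trans {a b c : S} (h1 : LStar a b) (h2 : LStar b c) : LStar a c :=
  fun x y => (h1 x y).trans (h2 x y)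

lemma aux_lstar_right {a b : S} (h : LStar a b) (c : S) : LStar (a * c) (b * c) := by
  intro x y
  push_cast [WithOne.coe_mul]
  rw [mul_assoc, mul_assoc, mul_assoc, mul_assoc]
  exact h (c * x) (c * y)

lemma aux_idem_eq_s19 (hample : IsAmple S plus star) {e f : S} (he : e * e = e) (hf : f * f = f)
    (h : LStar e f) : e = f := by
  have h1 : e * f = e := by
    have := (h (f : WithOne S) 1).mpr (by rw [← WithOne.coe_mul, hf, mul_one])
    rw [mul_one, ← WithOne.coe_mul, WithOne.coe_inj] at this
    exact this
  have h2 : f * e = f := by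
    have := (h (e : WithOne S) 1).mp (by rw [← WithOne.coe_mul, he, mul_one])
    rw [mul_one, ← WithOne.coe_mul, WithOne.coe_inj] at this
    exact this
  rw [← h1, hample.2.2.1 e f he hf, h2]

lemma aux_star_eq (hample : IsAmple S plus star) {a b : S} (h : LStar a b) :
    star a = star b :=
  aux_idem_eq_s19 hample (hample.2.1 a).1 (hample.2.1 b).1
    (aux_lstar_trans (aux_lstar_symm (hample.2.1 a).2)
      (aux_lstar_trans h (hample.2.1 b).2))

end Aux

/-- Every nonzero idempotent is primitive. -/
def IsPrimitiveSemigroup (S : Type*) [SemigroupWithZero S] : Prop :=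
  ∀ e : S, e * e = e → e ≠ 0 →
    ∀ f : S, f * f = f → e * f = f → f * e = f → f = 0 ∨ f = e

theorem stmt_19 {S : Type*} [SemigroupWithZero S] (plus star : S → S)
    (hample : IsAmple S plus star) (hprim : IsPrimitiveSemigroup S) :
    CategoricalAtZero S ↔
      ∀ a b : S, a ≠ 0 → b ≠ 0 → (a * b ≠ 0 ↔ star a = plus b) := by
  have hplus := aux_plus_mul hample
  have hstarm := aux_mul_star hample
  constructor
  · intro hcat a b ha hb
    constructor
    · intro hab
      -- a * b ≠ 0 implies star a * plus b ≠ 0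
      have hef : star a * plus b ≠ 0 := by
        intro h0
        apply hab
        have : a * b = a * (star a * plus b) * b := by
          conv_lhs => rw [← hstarm a, ← hplus b]
          rw [mul_assoc, mul_assoc, mul_assoc]
        rw [this, h0, mul_zero, zero_mul]
      have he : star a * star a = star a := (hample.2.1 a).1
      have hf : plus b * plus b = plus b := (hample.1 b).1
      have hez : star a ≠ 0 := fun h0 => ha (by rw [← hstarm a, h0, mul_zero])
      have hfz : plus b ≠ 0 := fun h0 => hb (by rw [← hplus b, h0, zero_mul])
      have hcomm : star a * plus b = plus b * star a := hample.2.2.1 _ _ he hf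
      have hefi : (star a * plus b) * (star a * plus b) = star a * plus b := by
        rw [mul_assoc, ← mul_assoc (plus b), ← hcomm, mul_assoc, hf, ← mul_assoc, he]
      have h1 : star a * plus b = star a := by
        rcases hprim (star a) he hez (star a * plus b) hefi
          (by rw [← mul_assoc, he])
          (by rw [mul_assoc, ← hcomm, ← mul_assoc, he]) with h | h
        · exact absurd h hef
        · exact h
      have h2 : star a * plus b = plus b := by
        rcases hprim (plus b) hf hfz (star a * plus b) hefi
          (by rw [hcomm, ← mul_assoc, hf])
          (by rw [mul_assoc, hf]) with h | h
        · exact absurd h hef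
        · exact h
      rw [← h1, h2]
    · intro heq
      have h1 : a * star a ≠ 0 := by rw [hstarm a]; exact ha
      have h2 : star a * b ≠ 0 := by rw [heq, hplus b]; exact hb
      have := hcat a (star a) b h1 h2
      rwa [hstarm a] at this
  · intro hP a b c hab hbc
    have ha : a ≠ 0 := fun h => hab (by rw [h, zero_mul])
    have hb : b ≠ 0 := fun h => hab (by rw [h, mul_zero])
    have hc : c ≠ 0 := fun h => hbc (by rw [h, mul_zero])
    have e1 : star a = plus b := (hP a b ha hb).mp hab
    have e2 : star b = plus c := (hP b c hb hc).mp hbc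
    have hL : LStar (a * b) b := by
      have := aux_lstar_right (hample.2.1 a).2 b
      rwa [e1, hplus b] at this
    have e3 : star (a * b) = plus c := by
      rw [aux_star_eq hample hL, e2]
    exact (hP (a * b) c hab hc).mpr e3
end
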